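/- arXiv:2310.00201 — 2 statements merged into one kernel-verified Lean document; each statement's English description precedes it below -/
import Mathlib

section
/- For a simplicial object X in an abelian category A, the composite of the inclusion of the normalized chain complex into the Moore complex with the quotient onto the Moore complex modulo degeneracies, N_*(X) → M_*(X) → M_*(X)/D_*(X), is an isomorphism of chain complexes, and both the inclusion N_*(X) → M_*(X) and the quotient M_*(X) → M_*(X)/D_*(X) are quasi-isomorphisms. -/
open CategoryTheory CategoryTheory.Limits AlgebraicTopology

noncomputable section

variable {A : Type*} [Category A] [Abelian A]

/-- The degenerate subobject `D_n(X) ⊆ X_n`: the subobject generated by the images of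
the degeneracy maps `s_0, …, s_{n-1} : X_{n-1} → X_n`. -/
noncomputable def DSub (X : SimplicialObject A) :
    (n : ℕ) → Subobject (X.obj (Opposite.op (SimplexCategory.mk n)))
  | 0 => ⊥
  | (m + 1) => Finset.univ.sup fun i : Fin (m + 1) => Limits.imageSubobject (X.σ i)

open Simplicial

open AlgebraicTopology.DoldKan in
/-- The degenerate subobject is contained in the kernel of `PInfty`. -/
lemma DSub_le_kernelSubobject_PInfty (X : SimplicialObject A) (n : ℕ) :
    DSub X n ≤ kernelSubobject (PInfty.f n) := by
  cases n with
  | zero => exact bot_le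
  | succ m =>
    apply Finset.sup_le
    intro i _
    exact imageSubobject_le _
      ((kernelSubobject _).factorThru (X.σ i)
        (kernelSubobject_factors _ _ (σ_comp_PInfty X i)))
      (Subobject.factorThru_arrow _ _ _)

open AlgebraicTopology.DoldKan in
/-- For a simplicial object `X` in an abelian category, the composite of the inclusion
`N_*(X) → M_*(X)` of the normalized complex in the Moore complex with the projection onto
the quotient `M_*(X)/D_*(X)` by the degeneracies is an isomorphism, and both the inclusion
and the projection are quasi-isomorphisms. -/
theorem statement4 (X : SimplicialObject A)
    (Q : ChainComplex A ℕ) (π : (alternatingFaceMapComplex A).obj X ⟶ Q)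
    (hepi : ∀ n, Epi (π.f n))
    (hker : ∀ n, Limits.kernelSubobject (π.f n) = DSub X n) :
    IsIso (inclusionOfMooreComplexMap X ≫ π) ∧
      QuasiIso (inclusionOfMooreComplexMap X) ∧ QuasiIso π := by
  -- degeneracies die under `π`
  have hσπ : ∀ (m : ℕ) (i : Fin (m + 1)), X.σ i ≫ π.f (m + 1) = 0 := by
    intro m i
    rw [← kernelSubobject_factors_iff, hker]
    exact Subobject.factors_of_le _
      (Finset.le_sup (f := fun i : Fin (m + 1) => imageSubobject (X.σ i)) (Finset.mem_univ i))
      (by simpa using imageSubobject_factors_comp_self (X.σ i) (𝟙 _))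
  -- `QInfty` dies under `π`
  have hQπ : ∀ n, (QInfty.f n : X _⦋n⦌ ⟶ _) ≫ π.f n = 0 := by
    intro n
    cases n with
    | zero => rw [QInfty_f_0, Limits.zero_comp]
    | succ m =>
      rw [QInfty_f, decomposition_Q m (m + 1), Preadditive.sum_comp]
      apply Finset.sum_eq_zero
      intro i _
      rw [Category.assoc, Category.assoc, hσπ, Limits.comp_zero, Limits.comp_zero]
  -- `π = PInfty ≫ π` in each degree
  have hPπ : ∀ n, (PInfty.f n : X _⦋n⦌ ⟶ _) ≫ π.f n = π.f n := by
    intro n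
    calc (PInfty.f n : X _⦋n⦌ ⟶ _) ≫ π.f n
        = ((PInfty.f n : X _⦋n⦌ ⟶ _) + QInfty.f n) ≫ π.f n := by
          rw [Preadditive.add_comp, hQπ, add_zero]
      _ = π.f n := by rw [PInfty_f_add_QInfty_f, Category.id_comp]
  -- anything killed by `π` is killed by `PInfty`
  have hkerP : ∀ (n : ℕ) {T : A} (g : T ⟶ X _⦋n⦌), g ≫ π.f n = 0 → g ≫ PInfty.f n = 0 := by
    intro n T g hg
    rw [← kernelSubobject_factors_iff]
    exact Subobject.factors_of_le _
      ((hker n).le.trans (DSub_le_kernelSubobject_PInfty X n))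
      (kernelSubobject_factors _ _ hg)
  have hiso : ∀ n, IsIso ((inclusionOfMooreComplexMap X ≫ π).f n) := by
    intro n
    rw [HomologicalComplex.comp_f]
    have hmono : Mono ((inclusionOfMooreComplexMap X).f n ≫ π.f n) := by
      apply Preadditive.mono_of_cancel_zero
      intro T g hg
      rw [← Category.assoc] at hg
      have h2 := hkerP n _ hg
      rw [Category.assoc] at h2
      have h3 : (inclusionOfMooreComplexMap X).f n ≫ PInfty.f n =
          (inclusionOfMooreComplexMap X).f n := by
        conv_rhs => rw [← inclusionOfMooreComplexMap_comp_PInfty X]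
        rfl
      rw [h3] at h2
      have : Mono ((inclusionOfMooreComplexMap X).f n) := by
        rw [inclusionOfMooreComplexMap_f]
        exact Subobject.arrow_mono _
      exact zero_of_comp_mono _ h2
    have hepi' : Epi ((inclusionOfMooreComplexMap X).f n ≫ π.f n) := by
      have h4 : (PInftyToNormalizedMooreComplex X).f n ≫
          (inclusionOfMooreComplexMap X).f n ≫ π.f n = π.f n := by
        refine (Category.assoc _ _ _).symm.trans ?_
        have := PInftyToNormalizedMooreComplex_comp_inclusionOfMooreComplexMap X
        rw [show (PInftyToNormalizedMooreComplex X).f n ≫ (inclusionOfMooreComplexMap X).f n =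
            (PInfty : _ ⟶ _).f n by rw [← this]; rfl]
        exact hPπ n
      have := hepi n
      rw [← h4] at this
      exact @epi_of_epi _ _ _ _ _ ((PInftyToNormalizedMooreComplex X).f n) _ this
    exact isIso_of_mono_of_epi _
  have hIso : IsIso (inclusionOfMooreComplexMap X ≫ π) :=
    @HomologicalComplex.Hom.isIso_of_components _ _ _ _ _ _ _ _ hiso
  have hQinc : QuasiIso (inclusionOfMooreComplexMap X) :=
    inferInstanceAs (QuasiIso
      (homotopyEquivNormalizedMooreComplexAlternatingFaceMapComplex (Y := X)).hom)
  refine ⟨hIso, hQinc, ?_⟩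
  have : QuasiIso (inclusionOfMooreComplexMap X ≫ π) := inferInstance
  exact quasiIso_of_comp_left (inclusionOfMooreComplexMap X) π

end
end

section
/- Let A be a Grothendieck abelian category (or R-modules) and let X be a simplicial chain complex in A. The canonical map ‖X‖ → |X| from the fat geometric realization of the underlying semisimplicial object to the geometric realization is a quasi-isomorphism. Equivalently, the map Tot^⊕(N_*(X)) → Tot^⊕(M_*(X)) induced by the inclusion of the normalized complex into the Moore complex is a quasi-isomorphism of chain complexes. -/
open CategoryTheory CategoryTheory.Limits AlgebraicTopology HomologicalComplex

noncomputable section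

instance : TotalComplexShape (ComplexShape.down ℕ) (ComplexShape.down ℤ) (ComplexShape.down ℤ) where
  π := fun p => (p.1 : ℤ) + p.2
  ε₁ := fun _ => 1
  ε₂ := fun p => (-1 : ℤˣ) ^ p.1
  rel₁ := by rintro i i' h l; simp only [ComplexShape.down_Rel] at *; omega
  rel₂ := by rintro k i i' h; simp only [ComplexShape.down_Rel] at *; omega
  ε₂_ε₁ := by
    rintro i i' l l' h h'
    simp only [ComplexShape.down_Rel] at h
    subst h
    simp [pow_succ]

section TotalHomotopy

variable {C : Type*} [Category C] [Preadditive C]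
  {K L : HomologicalComplex₂ C (ComplexShape.down ℕ) (ComplexShape.down ℤ)}
  [K.HasTotal (ComplexShape.down ℤ)] [L.HasTotal (ComplexShape.down ℤ)]

open HomologicalComplex₂

/-- Totalization of a homotopy of maps of first-quadrant-ish bicomplexes. -/
def totalHomotopy {f g : K ⟶ L} (h : Homotopy f g) :
    Homotopy (total.map f (ComplexShape.down ℤ)) (total.map g (ComplexShape.down ℤ)) where
  hom n m := K.totalDesc
    (fun p q _ => (h.hom p (p + 1)).f q ≫ L.ιTotalOrZero (ComplexShape.down ℤ) (p + 1) q m)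
  zero n m hnm := by
    ext p q hpq
    rw [ι_totalDesc, L.ιTotalOrZero_eq_zero _ _ _ _ (by
      simp only [ComplexShape.down_Rel] at hnm
      intro hc
      exact hnm (by
        rw [← hpq, ← hc]
        show (p:ℤ) + q + 1 = ((p+1:ℕ):ℤ) + q
        push_cast; ring)), comp_zero, comp_zero]
  comm n := by
    ext p q hpq
    have hpq' : (p : ℤ) + q = n := hpq
    rw [dNext_eq _ (show (ComplexShape.down ℤ).Rel n (n-1) by simp),
      prevD_eq _ (show (ComplexShape.down ℤ).Rel (n+1) n by simp)]
    simp only [Preadditive.comp_add]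
    -- the "prevD" part
    have hB : K.ιTotal (ComplexShape.down ℤ) p q n hpq ≫
        (K.totalDesc fun p q _ => (h.hom p (p + 1)).f q ≫
          L.ιTotalOrZero (ComplexShape.down ℤ) (p + 1) q (n + 1)) ≫
        (L.total (ComplexShape.down ℤ)).d (n + 1) n =
        (h.hom p (p + 1)).f q ≫ (L.d (p + 1) p).f q ≫ L.ιTotal (ComplexShape.down ℤ) p q n hpq
        + ((-1 : ℤˣ) ^ (p + 1)) • ((K.X p).d q (q - 1) ≫ (h.hom p (p + 1)).f (q - 1) ≫
            L.ιTotal (ComplexShape.down ℤ) (p + 1) (q - 1) n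
              (show ((p + 1 : ℕ) : ℤ) + (q - 1) = n by push_cast; omega)) := by
      rw [K.ι_totalDesc_assoc, L.ιTotalOrZero_eq _ _ _ _
          (show ((p + 1 : ℕ) : ℤ) + q = n + 1 by push_cast; omega),
        HomologicalComplex₂.total_d, Preadditive.comp_add, Category.assoc, Category.assoc,
        L.ι_D₁ (ComplexShape.down ℤ) (n + 1) n (p + 1) q,
        L.ι_D₂ (ComplexShape.down ℤ) (n + 1) n (p + 1) q,
        L.d₁_eq (ComplexShape.down ℤ) (show (ComplexShape.down ℕ).Rel (p + 1) p by simp) q n hpq,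
        L.d₂_eq (ComplexShape.down ℤ) (p + 1) (show (ComplexShape.down ℤ).Rel q (q - 1) by simp) n
          (show ((p + 1 : ℕ) : ℤ) + (q - 1) = n by push_cast; omega),
        show ComplexShape.ε₁ (ComplexShape.down ℕ) (ComplexShape.down ℤ) (ComplexShape.down ℤ)
          (p + 1, q) = 1 from rfl,
        show ComplexShape.ε₂ (ComplexShape.down ℕ) (ComplexShape.down ℤ) (ComplexShape.down ℤ)
          (p + 1, q) = (-1 : ℤˣ) ^ (p + 1) from rfl, one_smul,
        Linear.comp_units_smul,
        HomologicalComplex.Hom.comm_assoc (h.hom p (p + 1)) q (q - 1)]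
    -- the "dNext" part
    have hA1 : K.d₁ (ComplexShape.down ℤ) p q (n - 1) ≫
        K.totalDesc (fun p q _ => (h.hom p (p + 1)).f q ≫
          L.ιTotalOrZero (ComplexShape.down ℤ) (p + 1) q n) =
        (dNext p h.hom).f q ≫ L.ιTotal (ComplexShape.down ℤ) p q n hpq := by
      obtain _ | p' := p
      · rw [K.d₁_eq_zero (ComplexShape.down ℤ) 0 q (n - 1)
          (by simp only [ComplexShape.down_Rel]; omega), zero_comp,
          dNext_eq_zero h.hom 0 (by simp only [ComplexShape.down_Rel]; omega)]
        simp
      · rw [K.d₁_eq (ComplexShape.down ℤ)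
          (show (ComplexShape.down ℕ).Rel (p' + 1) p' by simp) q (n - 1)
          (show ((p' : ℕ) : ℤ) + q = n - 1 by push_cast at hpq' ⊢; omega),
          show ComplexShape.ε₁ (ComplexShape.down ℕ) (ComplexShape.down ℤ) (ComplexShape.down ℤ)
            (p' + 1, q) = 1 from rfl, one_smul, Category.assoc, ι_totalDesc,
          L.ιTotalOrZero_eq _ _ _ _ (show ((p' + 1 : ℕ) : ℤ) + q = n by exact hpq'),
          dNext_eq h.hom (show (ComplexShape.down ℕ).Rel (p' + 1) p' by simp),
          HomologicalComplex.comp_f, Category.assoc]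
    have hA2 : K.d₂ (ComplexShape.down ℤ) p q (n - 1) ≫
        K.totalDesc (fun p q _ => (h.hom p (p + 1)).f q ≫
          L.ιTotalOrZero (ComplexShape.down ℤ) (p + 1) q n) =
        - (((-1 : ℤˣ) ^ (p + 1)) • ((K.X p).d q (q - 1) ≫ (h.hom p (p + 1)).f (q - 1) ≫
            L.ιTotal (ComplexShape.down ℤ) (p + 1) (q - 1) n
              (show ((p + 1 : ℕ) : ℤ) + (q - 1) = n by push_cast; omega))) := by
      rw [K.d₂_eq (ComplexShape.down ℤ) p
          (show (ComplexShape.down ℤ).Rel q (q - 1) by simp) (n - 1)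
          (show ((p : ℕ) : ℤ) + (q - 1) = n - 1 by omega),
        show ComplexShape.ε₂ (ComplexShape.down ℕ) (ComplexShape.down ℤ) (ComplexShape.down ℤ)
          (p, q) = (-1 : ℤˣ) ^ p from rfl,
        Linear.units_smul_comp, Category.assoc, ι_totalDesc,
        L.ιTotalOrZero_eq _ _ _ _ (show ((p + 1 : ℕ) : ℤ) + (q - 1) = n by push_cast; omega),
        show ((-1 : ℤˣ) ^ p) = -(-1 : ℤˣ) ^ (p + 1) by rw [pow_succ]; simp, Units.neg_smul]
    have hA : K.ιTotal (ComplexShape.down ℤ) p q n hpq ≫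
        (K.total (ComplexShape.down ℤ)).d n (n - 1) ≫
        K.totalDesc (fun p q _ => (h.hom p (p + 1)).f q ≫
          L.ιTotalOrZero (ComplexShape.down ℤ) (p + 1) q n) =
        K.d₁ (ComplexShape.down ℤ) p q (n - 1) ≫
          K.totalDesc (fun p q _ => (h.hom p (p + 1)).f q ≫
            L.ιTotalOrZero (ComplexShape.down ℤ) (p + 1) q n) +
        K.d₂ (ComplexShape.down ℤ) p q (n - 1) ≫
          K.totalDesc (fun p q _ => (h.hom p (p + 1)).f q ≫
            L.ιTotalOrZero (ComplexShape.down ℤ) (p + 1) q n) := by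
      rw [HomologicalComplex₂.total_d, Preadditive.add_comp, Preadditive.comp_add,
        K.ι_D₁_assoc, K.ι_D₂_assoc]
    rw [hA, hA1, hA2, hB, ιTotal_map, ιTotal_map]
    have hcomm := h.comm p
    rw [prevD_eq h.hom (show (ComplexShape.down ℕ).Rel (p + 1) p by simp)] at hcomm
    have hcomm' := congr_arg (fun φ => HomologicalComplex.Hom.f φ q) hcomm
    simp only [HomologicalComplex.add_f_apply, HomologicalComplex.comp_f] at hcomm'
    rw [hcomm']
    simp only [Preadditive.add_comp, Category.assoc]
    abel

end TotalHomotopy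

variable {R : Type} [Ring R] in
/-- The totalized inclusion as a homotopy equivalence. -/
def totalMooreEquiv (X : SimplicialObject (ChainComplex (ModuleCat.{0} R) ℤ))
    [HomologicalComplex₂.HasTotal
      ((normalizedMooreComplex (ChainComplex (ModuleCat.{0} R) ℤ)).obj X)
      (ComplexShape.down ℤ)]
    [HomologicalComplex₂.HasTotal
      ((alternatingFaceMapComplex (ChainComplex (ModuleCat.{0} R) ℤ)).obj X)
      (ComplexShape.down ℤ)] :
    HomotopyEquiv
      (HomologicalComplex₂.total
        ((normalizedMooreComplex (ChainComplex (ModuleCat.{0} R) ℤ)).obj X)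
        (ComplexShape.down ℤ))
      (HomologicalComplex₂.total
        ((alternatingFaceMapComplex (ChainComplex (ModuleCat.{0} R) ℤ)).obj X)
        (ComplexShape.down ℤ)) where
  hom := HomologicalComplex₂.total.map (inclusionOfMooreComplexMap X) (ComplexShape.down ℤ)
  inv := HomologicalComplex₂.total.map (DoldKan.PInftyToNormalizedMooreComplex X)
    (ComplexShape.down ℤ)
  homotopyHomInvId := Homotopy.ofEq (by
    refine (HomologicalComplex₂.total.map_comp _ _ _).symm.trans ?_
    rw [show inclusionOfMooreComplexMap X ≫ DoldKan.PInftyToNormalizedMooreComplex X = 𝟙 _ from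
      (DoldKan.splitMonoInclusionOfMooreComplexMap X).id]
    exact HomologicalComplex₂.total.map_id _ _)
  homotopyInvHomId := by
    refine (Homotopy.ofEq ?_).trans
      (((totalHomotopy (DoldKan.homotopyPInftyToId X))).trans
        (Homotopy.ofEq (HomologicalComplex₂.total.map_id _ _)))
    refine (HomologicalComplex₂.total.map_comp _ _ _).symm.trans ?_
    rw [DoldKan.PInftyToNormalizedMooreComplex_comp_inclusionOfMooreComplexMap]

/-- For a simplicial chain complex `X`, the map `‖X‖ → |X|` from the fat geometric
realization to the geometric realization, identified with the map
`Tot^⊕(N_*(X)) → Tot^⊕(M_*(X))` induced by the inclusion of the normalized chain complex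
of `X` into its Moore complex, is a quasi-isomorphism. -/
theorem statement10 {R : Type} [Ring R]
    (X : SimplicialObject (ChainComplex (ModuleCat.{0} R) ℤ))
    [HomologicalComplex₂.HasTotal
      ((normalizedMooreComplex (ChainComplex (ModuleCat.{0} R) ℤ)).obj X)
      (ComplexShape.down ℤ)]
    [HomologicalComplex₂.HasTotal
      ((alternatingFaceMapComplex (ChainComplex (ModuleCat.{0} R) ℤ)).obj X)
      (ComplexShape.down ℤ)] :
    QuasiIso (HomologicalComplex₂.total.map (inclusionOfMooreComplexMap X)
      (ComplexShape.down ℤ)) := by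
  exact inferInstanceAs (QuasiIso (totalMooreEquiv X).hom)

end
end
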